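/- Assume there exists C ∈ ℝ₊ such that f_{iδ}(u)/f_i(u) ≤ C for all u in the definition domain of X_i, and that the perturbed output distribution F_{iδ} satisfies: its α-quantile q_{iδ}^α is the unique t with F_{iδ}(s) < α for s < t and F_{iδ}(s) > α for s > t. Then the self-normalized importance sampling quantile estimator q̃_{iδ}^{αN} = inf{t ∈ ℝ : F̃_{iδ}^N(t) ≥ α} converges almost surely to q_{iδ}^α as N → ∞. -/

import Mathlib

open MeasureTheory Filter
open scoped ENNReal NNReal

/-- Deterministic lemma: pointwise convergence of monotone functions at rational
points to a function with a unique crossing of level `α` at `q` implies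
convergence of the generalized-inverse values. -/
lemma aux_sInf_tendsto {F : ℝ → ℝ} {α q : ℝ}
    (hbelow : ∀ s, s < q → F s < α) (habove : ∀ s, q < s → α < F s)
    (g : ℕ → ℝ → ℝ) (hmono : ∀ N, Monotone (g N))
    (hg : ∀ r : ℚ, Tendsto (fun N => g N (r : ℝ)) atTop (nhds (F r))) :
    Tendsto (fun N => sInf {t : ℝ | α ≤ g N t}) atTop (nhds q) := by
  rw [Metric.tendsto_atTop]
  intro ε hε
  obtain ⟨r0, hr0a, hr0b⟩ := exists_rat_btwn (show q - ε < q by linarith)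
  obtain ⟨r1, hr1a, hr1b⟩ := exists_rat_btwn (show q < q + ε by linarith)
  have h0 : ∀ᶠ N in atTop, g N (r0 : ℝ) < α :=
    (hg r0).eventually_lt_const (hbelow _ hr0b)
  have h1 : ∀ᶠ N in atTop, α < g N (r1 : ℝ) :=
    (hg r1).eventually_const_lt (habove _ hr1a)
  obtain ⟨N₀, hN₀⟩ := eventually_atTop.1 (h0.and h1)
  refine ⟨N₀, fun N hN => ?_⟩
  obtain ⟨hl, hu⟩ := hN₀ N hN
  have hmem : (r1 : ℝ) ∈ {t : ℝ | α ≤ g N t} := le_of_lt hu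
  have hlb : ∀ t ∈ {t : ℝ | α ≤ g N t}, (r0 : ℝ) ≤ t := by
    intro t ht
    by_contra hct
    push_neg at hct
    exact absurd (le_trans ht (hmono N hct.le)) (not_le.2 hl)
  have hup : sInf {t : ℝ | α ≤ g N t} ≤ (r1 : ℝ) := csInf_le ⟨(r0 : ℝ), hlb⟩ hmem
  have hlo : (r0 : ℝ) ≤ sInf {t : ℝ | α ≤ g N t} := le_csInf ⟨(r1 : ℝ), hmem⟩ hlb
  rw [Real.dist_eq, abs_lt]
  constructor <;> linarith

/-- Integral against a `withDensity` with a nonnegative real density. -/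
lemma aux_integral_withDensity {β : Type*} [MeasurableSpace β] (μ : Measure β)
    {p : β → ℝ} (hp : Measurable p) (hp0 : ∀ x, 0 ≤ p x) (g : β → ℝ) :
    ∫ x, g x ∂(μ.withDensity (fun x => ENNReal.ofReal (p x)))
      = ∫ x, p x * g x ∂μ := by
  have h1 : (fun x => ENNReal.ofReal (p x))
      = fun x => ((fun y => (p y).toNNReal) x : ℝ≥0∞) := rfl
  rw [h1, integral_withDensity_eq_integral_smul hp.real_toNNReal]
  refine integral_congr_ae (Filter.EventuallyEq.of_eq ?_)
  funext x
  simp [NNReal.smul_def, Real.coe_toNNReal _ (hp0 x)]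

/-- Strong law of large numbers for bounded measurable functionals of an
i.i.d. sequence. -/
lemma aux_slln {Ω : Type*} [MeasurableSpace Ω] {ℙ : Measure Ω} [IsProbabilityMeasure ℙ]
    {β : Type*} [MeasurableSpace β] {μ : Measure β}
    (X : ℕ → Ω → β) (hX_meas : ∀ n, Measurable (X n))
    (hX_law : ∀ n, Measure.map (X n) ℙ = μ)
    (hX_indep : ProbabilityTheory.iIndepFun X ℙ)
    (h : β → ℝ) (hh : Measurable h) (B : ℝ) (hB : ∀ x, |h x| ≤ B) :
    ∀ᵐ ω ∂ℙ, Tendsto (fun N : ℕ => (∑ n ∈ Finset.range N, h (X n ω)) / N)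
      atTop (nhds (∫ x, h x ∂μ)) := by
  have hint : Integrable (fun ω => h (X 0 ω)) ℙ := by
    refine Integrable.mono' (integrable_const B)
      ((hh.comp (hX_meas 0)).aestronglyMeasurable) ?_
    exact Filter.Eventually.of_forall fun ω => hB _
  have hindep : Pairwise (Function.onFun (ProbabilityTheory.IndepFun · · ℙ) fun n ω => h (X n ω)) := by
    intro m n hmn
    exact (hX_indep.indepFun hmn).comp hh hh
  have hident : ∀ n, ProbabilityTheory.IdentDistrib (fun ω => h (X n ω))
      (fun ω => h (X 0 ω)) ℙ ℙ := by
    intro n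
    have hb : ProbabilityTheory.IdentDistrib (X n) (X 0) ℙ ℙ :=
      ⟨(hX_meas n).aemeasurable, (hX_meas 0).aemeasurable, by rw [hX_law n, hX_law 0]⟩
    exact hb.comp hh
  have hlim : ∫ ω, h (X 0 ω) ∂ℙ = ∫ x, h x ∂μ := by
    rw [← hX_law 0, integral_map (hX_meas 0).aemeasurable hh.aestronglyMeasurable]
  have := ProbabilityTheory.strong_law_ae_real (fun n ω => h (X n ω)) hint hindep hident
  rw [hlim] at this
  exact this

/-- Strong consistency of the self-normalized importance sampling quantile
estimator: if the likelihood ratio is bounded by `C` on the domain of `X_i`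
and `q_{iδ}^α` is the unique crossing point of level `α` for the perturbed
output distribution function `F_{iδ}`, then
`q̃_{iδ}^{αN} = inf{t : F̃_{iδ}^N(t) ≥ α} → q_{iδ}^α` almost surely. -/
theorem self_normalized_IS_quantile_strongly_consistent
    (d : ℕ) (i : Fin d) (f : Fin d → ℝ → ℝ) (fδ : ℝ → ℝ)
    (hf_meas : ∀ j, Measurable (f j)) (hfδ_meas : Measurable fδ)
    (hf_nonneg : ∀ j x, 0 ≤ f j x) (hfδ_nonneg : ∀ x, 0 ≤ fδ x)
    (hf_int : ∀ j, ∫ x, f j x = 1) (hfδ_int : ∫ x, fδ x = 1)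
    (habs : ∀ᵐ x : ℝ, fδ x > 0 → f i x > 0)
    (C : ℝ) (hC : 0 ≤ C)
    (hbound : ∀ u : ℝ, 0 < f i u → fδ u / f i u ≤ C)
    (μ : Measure (Fin d → ℝ))
    (hμ : μ = volume.withDensity (fun x => ENNReal.ofReal (∏ j, f j (x j))))
    (G : (Fin d → ℝ) → ℝ) (hG : Measurable G)
    (α : ℝ) (hα : 0 < α) (hα1 : α < 1)
    (Fδ : ℝ → ℝ)
    (hFδ : ∀ t, Fδ t = ((volume.withDensity
        (fun x => ENNReal.ofReal (fδ (x i) * ∏ j ∈ Finset.univ.erase i, f j (x j))))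
        {x | G x ≤ t}).toReal)
    (qδα : ℝ) (hqδα : qδα = sInf {t : ℝ | α ≤ Fδ t})
    -- `q_{iδ}^α` is the unique solution of the crossing inequalities
    (hbelow : ∀ s, s < qδα → Fδ s < α) (habove : ∀ s, qδα < s → α < Fδ s)
    -- the i.i.d. sample
    (Ω : Type*) [MeasurableSpace Ω] (ℙ : Measure Ω) [IsProbabilityMeasure ℙ]
    (X : ℕ → Ω → (Fin d → ℝ)) (hX_meas : ∀ n, Measurable (X n))
    (hX_law : ∀ n, Measure.map (X n) ℙ = μ)
    (hX_indep : ProbabilityTheory.iIndepFun X ℙ) :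
    ∀ᵐ ω ∂ℙ, Tendsto (fun N : ℕ =>
        sInf {t : ℝ | α ≤
          (∑ n ∈ Finset.range N,
            (fδ (X n ω i) / f i (X n ω i)) * (if G (X n ω) ≤ t then (1 : ℝ) else 0)) /
          (∑ n ∈ Finset.range N, fδ (X n ω i) / f i (X n ω i))})
      atTop (nhds qδα) := by
  classical
  -- the likelihood ratio
  set L : (Fin d → ℝ) → ℝ := fun x => fδ (x i) / f i (x i) with hLdef
  have hL_meas : Measurable L :=
    (hfδ_meas.comp (measurable_pi_apply i)).div ((hf_meas i).comp (measurable_pi_apply i))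
  have hL_nonneg : ∀ x, 0 ≤ L x := fun x =>
    div_nonneg (hfδ_nonneg _) (hf_nonneg i _)
  have hL_le : ∀ x, L x ≤ C := by
    intro x
    rcases (hf_nonneg i (x i)).eq_or_lt with h | h
    · simp only [hLdef, ← h, div_zero]
      exact hC
    · exact hbound _ h
  -- densities
  set p : (Fin d → ℝ) → ℝ := fun x => ∏ j, f j (x j) with hpdef
  set q : (Fin d → ℝ) → ℝ :=
    fun x => fδ (x i) * ∏ j ∈ Finset.univ.erase i, f j (x j) with hqdef
  have hp_meas : Measurable p :=
    Finset.measurable_prod Finset.univ fun j _ => (hf_meas j).comp (measurable_pi_apply j)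
  have hp_nonneg : ∀ x, 0 ≤ p x := fun x =>
    Finset.prod_nonneg fun j _ => hf_nonneg j _
  have hq_meas : Measurable q :=
    (hfδ_meas.comp (measurable_pi_apply i)).mul
      (Finset.measurable_prod (Finset.univ.erase i) fun j _ =>
        (hf_meas j).comp (measurable_pi_apply j))
  have hq_nonneg : ∀ x, 0 ≤ q x := fun x =>
    mul_nonneg (hfδ_nonneg _) (Finset.prod_nonneg fun j _ => hf_nonneg j _)
  -- a.e. identity between the two densities
  have hdens : ∀ᵐ x : (Fin d → ℝ), L x * p x = q x := by
    have h0 : (volume : Measure ℝ) {u : ℝ | ¬ (fδ u > 0 → f i u > 0)} = 0 :=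
      ae_iff.1 habs
    have h1 : (volume : Measure (Fin d → ℝ))
        {x : Fin d → ℝ | ¬ (fδ (x i) > 0 → f i (x i) > 0)} = 0 := by
      rw [volume_pi]
      exact Measure.pi_eval_preimage_null (μ := fun _ : Fin d => (volume : Measure ℝ)) h0
    have h2 : ∀ᵐ x : (Fin d → ℝ), fδ (x i) > 0 → f i (x i) > 0 := by
      rw [ae_iff]; exact h1
    filter_upwards [h2] with x hx
    have hsplit : p x = f i (x i) * ∏ j ∈ Finset.univ.erase i, f j (x j) :=
      (Finset.mul_prod_erase Finset.univ (fun j => f j (x j)) (Finset.mem_univ i)).symm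
    rcases (hf_nonneg i (x i)).eq_or_lt with h | h
    · have hfi : f i (x i) = 0 := h.symm
      have hfδ0 : fδ (x i) = 0 := by
        by_contra hne
        exact absurd (hx (lt_of_le_of_ne (hfδ_nonneg _) (Ne.symm hne))) (by simp [hfi])
      simp [hLdef, hqdef, hfi, hfδ0]
    · rw [hsplit]
      simp only [hLdef, hqdef]
      rw [div_mul_eq_mul_div,
        mul_comm (f i (x i)) (∏ j ∈ Finset.univ.erase i, f j (x j)),
        ← mul_assoc, mul_div_assoc, div_self h.ne', mul_one]
  -- expectation of the likelihood ratio is 1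
  have hq_prod : ∀ x : Fin d → ℝ,
      q x = ∏ j, (fun j => if j = i then fδ else f j) j (x j) := by
    intro x
    have hsplit : (∏ j, (fun j => if j = i then fδ else f j) j (x j))
        = (if i = i then fδ else f i) (x i)
          * ∏ j ∈ Finset.univ.erase i, (if j = i then fδ else f j) (x j) :=
      (Finset.mul_prod_erase Finset.univ
        (fun j => (fun j => if j = i then fδ else f j) j (x j)) (Finset.mem_univ i)).symm
    rw [hsplit, if_pos rfl]
    show fδ (x i) * (∏ j ∈ Finset.univ.erase i, f j (x j)) = _
    congr 1
    refine Finset.prod_congr rfl fun j hj => ?_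
    rw [if_neg (Finset.ne_of_mem_erase hj)]
  have hq_int : ∫ x : Fin d → ℝ, q x = 1 := by
    have : ∫ x : Fin d → ℝ, q x
        = ∫ x : Fin d → ℝ, ∏ j, (fun j => if j = i then fδ else f j) j (x j) := by
      refine integral_congr_ae (Filter.EventuallyEq.of_eq ?_)
      funext x; exact hq_prod x
    rw [this, MeasureTheory.integral_fintype_prod_volume_eq_prod]
    refine Finset.prod_eq_one fun j _ => ?_
    by_cases hji : j = i
    · simp [hji, hfδ_int]
    · simp [hji, hf_int j]
  have hEL : ∫ x, L x ∂μ = 1 := by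
    rw [hμ, aux_integral_withDensity volume hp_meas hp_nonneg L]
    have : ∫ x : Fin d → ℝ, p x * L x = ∫ x : Fin d → ℝ, q x := by
      refine integral_congr_ae ?_
      filter_upwards [hdens] with x hx
      rw [mul_comm, hx]
    rw [this, hq_int]
  -- expectation of the weighted indicator is `Fδ t`
  have hEind : ∀ t : ℝ, ∫ x, L x * (if G x ≤ t then (1 : ℝ) else 0) ∂μ = Fδ t := by
    intro t
    have hset : MeasurableSet {x : Fin d → ℝ | G x ≤ t} :=
      measurableSet_le hG measurable_const
    rw [hμ, aux_integral_withDensity volume hp_meas hp_nonneg]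
    have h1 : ∫ x : Fin d → ℝ, p x * (L x * (if G x ≤ t then (1 : ℝ) else 0))
        = ∫ x : Fin d → ℝ, q x * (if G x ≤ t then (1 : ℝ) else 0) := by
      refine integral_congr_ae ?_
      filter_upwards [hdens] with x hx
      rw [← hx]; ring
    rw [h1, ← aux_integral_withDensity volume hq_meas hq_nonneg]
    have h2 : ∫ x, (if G x ≤ t then (1 : ℝ) else 0)
          ∂(volume.withDensity fun x => ENNReal.ofReal (q x))
        = ∫ x, Set.indicator {x : Fin d → ℝ | G x ≤ t} (fun _ => (1 : ℝ)) x
          ∂(volume.withDensity fun x => ENNReal.ofReal (q x)) := by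
      refine integral_congr_ae (Filter.EventuallyEq.of_eq ?_)
      funext x
      simp [Set.indicator_apply]
    rw [h2]
    have h3 := integral_indicator_one
      (μ := volume.withDensity fun x => ENNReal.ofReal (q x)) hset
    rw [measureReal_def, ← hFδ t] at h3
    exact h3
  -- strong law of large numbers for denominator and numerators
  have hden : ∀ᵐ ω ∂ℙ, Tendsto
      (fun N : ℕ => (∑ n ∈ Finset.range N, L (X n ω)) / N) atTop (nhds 1) := by
    have := aux_slln X hX_meas hX_law hX_indep L hL_meas C
      (fun x => abs_le.2 ⟨by linarith [hL_nonneg x, hC], hL_le x⟩)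
    rw [hEL] at this
    exact this
  have hnum : ∀ r : ℚ, ∀ᵐ ω ∂ℙ, Tendsto
      (fun N : ℕ => (∑ n ∈ Finset.range N,
        L (X n ω) * (if G (X n ω) ≤ (r : ℝ) then (1 : ℝ) else 0)) / N)
      atTop (nhds (Fδ r)) := by
    intro r
    have hmeas : Measurable fun x => L x * (if G x ≤ (r : ℝ) then (1 : ℝ) else 0) :=
      hL_meas.mul (Measurable.ite (measurableSet_le hG measurable_const)
        measurable_const measurable_const)
    have hBnd : ∀ x, |L x * (if G x ≤ (r : ℝ) then (1 : ℝ) else 0)| ≤ C := by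
      intro x
      split_ifs with h
      · rw [mul_one, abs_of_nonneg (hL_nonneg x)]; exact hL_le x
      · simp [hC]
    have := aux_slln X hX_meas hX_law hX_indep _ hmeas C hBnd
    rw [hEind r] at this
    exact this
  filter_upwards [hden, (ae_all_iff).2 hnum] with ω hdω hnω
  refine aux_sInf_tendsto hbelow habove _ ?_ ?_
  · -- monotonicity in `t`
    intro N t t' htt'
    have hA : (∑ n ∈ Finset.range N,
          (fδ (X n ω i) / f i (X n ω i)) * (if G (X n ω) ≤ t then (1 : ℝ) else 0))
        ≤ ∑ n ∈ Finset.range N,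
          (fδ (X n ω i) / f i (X n ω i)) * (if G (X n ω) ≤ t' then (1 : ℝ) else 0) := by
      refine Finset.sum_le_sum fun n _ => ?_
      refine mul_le_mul_of_nonneg_left ?_ (hL_nonneg (X n ω))
      split_ifs with h1 h2
      · exact le_rfl
      · exact absurd (h1.trans htt') h2
      · norm_num
      · exact le_rfl
    have hS : 0 ≤ ∑ n ∈ Finset.range N, fδ (X n ω i) / f i (X n ω i) :=
      Finset.sum_nonneg fun n _ => hL_nonneg (X n ω)
    rcases hS.eq_or_lt with h | h
    · simp only [← h, div_zero, le_refl]
    · exact (div_le_div_iff_of_pos_right h).2 hA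
  · -- convergence at rational points
    intro r
    have h1 : Tendsto (fun N : ℕ =>
        ((∑ n ∈ Finset.range N, L (X n ω) * (if G (X n ω) ≤ (r : ℝ) then (1 : ℝ) else 0)) / N)
        / ((∑ n ∈ Finset.range N, L (X n ω)) / N)) atTop (nhds (Fδ r / 1)) :=
      (hnω r).div hdω one_ne_zero
    rw [div_one] at h1
    refine Tendsto.congr' ?_ h1
    filter_upwards [eventually_ge_atTop 1] with N hN
    have hN0 : (N : ℝ) ≠ 0 := Nat.cast_ne_zero.2 (by omega)
    rw [div_div_div_cancel_right₀ hN0]
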